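/- Let N = 1 + 2m + 3n and write z ∈ ℝ^N in blocks z = (t, b, c, x, y, s) with t ∈ ℝ, b, y ∈ ℝ^m, and c, x, s ∈ ℝ^n. Let K = homg(U) × ℝ^n_+ × ℝ^m × ℝ^n_+ ⊆ ℝ^N, and let E ∈ ℝ^{(m+n+1)×N} and f ∈ ℝ^{m+n+1} encode the linear equations Âx = t·b̂ + b, Â^T y + s = t·ĉ + c, and t = 1 (so f is zero except for a single entry 1 corresponding to the equation t = 1). Then, under Assumptions 1 and 2, q^+ = sup{(b̂+b)^T y : Âx = b̂+b, x ≥ 0, Â^T y + s = ĉ+c, s ≥ 0, (b,c) ∈ U} equals the optimal value of the completely positive program: maximize over (z, Z) ∈ ℝ^N × S^N the quantity (∑_{i=1}^m Z_{b_i, y_i}) + b̂^T y, subject to Ez = f, diag(E Z E^T) = f ∘ f, and the bordered matrix [[1, z^T],[z, Z]] ∈ CP(ℝ_+ × K). -/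

import Mathlib

open Matrix

/-- Index type for the variable `z = (t, b, c, x, y, s) ∈ ℝ^N`, `N = 1+2m+3n`. -/
abbrev RSAIdx (m n : ℕ) := Unit ⊕ (Fin m ⊕ (Fin n ⊕ (Fin n ⊕ (Fin m ⊕ Fin n))))

/-- Index type for the `m + n + 1` linear equations. -/
abbrev RSARow (m n : ℕ) := (Fin m ⊕ Fin n) ⊕ Unit

/-- The matrix `E` encoding the equations `Âx = t·b̂ + b`, `Âᵀy + s = t·ĉ + c`
and `t = 1` (each written with right-hand side `0`, `0`, `1` respectively). -/
def Emat (m n : ℕ) (Ahat : Matrix (Fin m) (Fin n) ℝ) (bhat : Fin m → ℝ)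
    (chat : Fin n → ℝ) : Matrix (RSARow m n) (RSAIdx m n) ℝ :=
  Matrix.of fun row col =>
    match row, col with
    | Sum.inl (Sum.inl i), Sum.inl _ => -bhat i
    | Sum.inl (Sum.inl i), Sum.inr (Sum.inl i') => if i = i' then -1 else 0
    | Sum.inl (Sum.inl _), Sum.inr (Sum.inr (Sum.inl _)) => 0
    | Sum.inl (Sum.inl i), Sum.inr (Sum.inr (Sum.inr (Sum.inl j))) => Ahat i j
    | Sum.inl (Sum.inl _), Sum.inr (Sum.inr (Sum.inr (Sum.inr _))) => 0
    | Sum.inl (Sum.inr j), Sum.inl _ => -chat j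
    | Sum.inl (Sum.inr _), Sum.inr (Sum.inl _) => 0
    | Sum.inl (Sum.inr j), Sum.inr (Sum.inr (Sum.inl j')) => if j = j' then -1 else 0
    | Sum.inl (Sum.inr _), Sum.inr (Sum.inr (Sum.inr (Sum.inl _))) => 0
    | Sum.inl (Sum.inr j), Sum.inr (Sum.inr (Sum.inr (Sum.inr (Sum.inl i)))) => Ahat i j
    | Sum.inl (Sum.inr j), Sum.inr (Sum.inr (Sum.inr (Sum.inr (Sum.inr j')))) =>
        if j = j' then 1 else 0
    | Sum.inr _, Sum.inl _ => 1
    | Sum.inr _, Sum.inr _ => 0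

/-- The right-hand-side vector `f`: all zeros except a `1` for `t = 1`. -/
def fvec (m n : ℕ) : RSARow m n → ℝ :=
  Sum.elim (Sum.elim (fun _ => 0) (fun _ => 0)) (fun _ => 1)

/-- The homogenization of a set `V`:
`homg(V) = {(t,v) : t > 0, v/t ∈ V} ∪ {(0,0)}`. -/
def homg {α : Type*} [AddCommMonoid α] [Module ℝ α] (V : Set α) : Set (ℝ × α) :=
  {p | 0 < p.1 ∧ p.1⁻¹ • p.2 ∈ V} ∪ {(0, 0)}

/-- The cone `K = homg(U) × ℝⁿ₊ × ℝᵐ × ℝⁿ₊` (blocks `(t,b,c)`, `x`, `y`, `s`). -/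
def Kset (m n : ℕ) (U : Set ((Fin m → ℝ) × (Fin n → ℝ))) : Set (RSAIdx m n → ℝ) :=
  {z | (z (Sum.inl ()), ((fun i => z (Sum.inr (Sum.inl i))),
        (fun j => z (Sum.inr (Sum.inr (Sum.inl j)))))) ∈ homg U ∧
    (∀ j, 0 ≤ z (Sum.inr (Sum.inr (Sum.inr (Sum.inl j))))) ∧
    (∀ j, 0 ≤ z (Sum.inr (Sum.inr (Sum.inr (Sum.inr (Sum.inr j))))))}

/-- The completely positive cone over a set `C` of vectors: all finite sums
`∑ₖ xᵏ(xᵏ)ᵀ` with each `xᵏ ∈ C`. -/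
def CPcone {ι : Type*} [Fintype ι] (C : Set (ι → ℝ)) : Set (Matrix ι ι ℝ) :=
  {X | ∃ (k : ℕ) (v : Fin k → ι → ℝ), (∀ j, v j ∈ C) ∧
    X = ∑ j, Matrix.vecMulVec (v j) (v j)}

/-- The bordered matrix `[[1, zᵀ], [z, Z]]`. -/
def borderedMatrix {ι : Type*} (z : ι → ℝ) (Z : Matrix ι ι ℝ) :
    Matrix (Unit ⊕ ι) (Unit ⊕ ι) ℝ :=
  Matrix.fromBlocks (Matrix.of fun _ _ => (1 : ℝ)) (Matrix.of fun _ j => z j)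
    (Matrix.of fun i _ => z i) Z

/-- The cone `ℝ₊ × K` as a set of bordered vectors. -/
def borderedCone (m n : ℕ) (U : Set ((Fin m → ℝ) × (Fin n → ℝ))) :
    Set (Unit ⊕ RSAIdx m n → ℝ) :=
  {w | 0 ≤ w (Sum.inl ()) ∧ (fun i => w (Sum.inr i)) ∈ Kset m n U}
section Aux
variable {m n : ℕ} (Ahat : Matrix (Fin m) (Fin n) ℝ) (bhat : Fin m → ℝ) (chat : Fin n → ℝ)

lemma Emat_mulVec_b (z : RSAIdx m n → ℝ) (i : Fin m) :
    (Emat m n Ahat bhat chat).mulVec z (Sum.inl (Sum.inl i)) =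
      -bhat i * z (Sum.inl ()) - z (Sum.inr (Sum.inl i))
        + ∑ j, Ahat i j * z (Sum.inr (Sum.inr (Sum.inr (Sum.inl j)))) := by
  simp [Emat, mulVec, dotProduct, Fintype.sum_sum_type, ite_mul,
    Finset.sum_ite_eq, sub_eq_add_neg]
  ring

lemma Emat_mulVec_c (z : RSAIdx m n → ℝ) (j : Fin n) :
    (Emat m n Ahat bhat chat).mulVec z (Sum.inl (Sum.inr j)) =
      -chat j * z (Sum.inl ()) - z (Sum.inr (Sum.inr (Sum.inl j)))
        + (∑ i, Ahat i j * z (Sum.inr (Sum.inr (Sum.inr (Sum.inr (Sum.inl i))))))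
        + z (Sum.inr (Sum.inr (Sum.inr (Sum.inr (Sum.inr j))))) := by
  simp [Emat, mulVec, dotProduct, Fintype.sum_sum_type, ite_mul,
    Finset.sum_ite_eq, sub_eq_add_neg]
  ring

lemma Emat_mulVec_t (z : RSAIdx m n → ℝ) :
    (Emat m n Ahat bhat chat).mulVec z (Sum.inr ()) = z (Sum.inl ()) := by
  simp [Emat, mulVec, dotProduct, Fintype.sum_sum_type]

lemma conj_vecMulVec {ι κ : Type*} [Fintype ι] [Fintype κ] (E : Matrix κ ι ℝ)
    (u w : ι → ℝ) (r r' : κ) :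
    (E * vecMulVec u w * E.transpose) r r' = E.mulVec u r * E.mulVec w r' := by
  simp only [Matrix.mul_apply, vecMulVec_apply, transpose_apply, mulVec, dotProduct]
  rw [Finset.sum_mul_sum, Finset.sum_comm]
  apply Finset.sum_congr rfl; intro c _
  rw [Finset.sum_mul]
  apply Finset.sum_congr rfl; intro c' _; ring

end Aux
lemma term_eq {m : ℕ} (t : ℝ) (ht : t ≠ 0) (bb yy bhat : Fin m → ℝ) :
    (∑ i, bb i * yy i) + t * ∑ i, bhat i * yy i
      = (t * t) * ((bhat + t⁻¹ • bb) ⬝ᵥ (t⁻¹ • yy)) := by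
  simp only [dotProduct, Pi.add_apply, Pi.smul_apply, smul_eq_mul]
  rw [Finset.mul_sum, Finset.mul_sum, ← Finset.sum_add_distrib]
  refine Finset.sum_congr rfl fun i _ => ?_
  field_simp
  ring
/-- Under Assumptions 1 and 2, the worst-case restricted value
`q⁺ = sup{(b̂+b)ᵀy : Âx = b̂+b, x ≥ 0, Âᵀy + s = ĉ+c, s ≥ 0, (b,c) ∈ U}` equals
the optimal value of the completely positive program: maximize
`(∑ᵢ Z_{bᵢ,yᵢ}) + b̂ᵀy` subject to `Ez = f`, `diag(EZEᵀ) = f ∘ f`, and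
`[[1, zᵀ],[z, Z]] ∈ CP(ℝ₊ × K)` with `K = homg(U) × ℝⁿ₊ × ℝᵐ × ℝⁿ₊`. -/
theorem q_plus_copositive_formulation (m n : ℕ)
    (Ahat : Matrix (Fin m) (Fin n) ℝ) (bhat : Fin m → ℝ) (chat : Fin n → ℝ)
    (U : Set ((Fin m → ℝ) × (Fin n → ℝ)))
    (hUcompact : IsCompact U) (hUconvex : Convex ℝ U) (hU0 : (0, 0) ∈ U)
    (hP0 : ∃ x : Fin n → ℝ, Ahat.mulVec x = bhat ∧ 0 ≤ x)
    (hD0 : ∃ (y : Fin m → ℝ) (s : Fin n → ℝ), Ahat.transpose.mulVec y + s = chat ∧ 0 ≤ s)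
    (hbdd : Bornology.IsBounded {x : Fin n → ℝ | Ahat.mulVec x = bhat ∧ 0 ≤ x} ∨
      Bornology.IsBounded {ys : (Fin m → ℝ) × (Fin n → ℝ) |
        Ahat.transpose.mulVec ys.1 + ys.2 = chat ∧ 0 ≤ ys.2}) :
    sSup {e : EReal | ∃ b c x y s, (b, c) ∈ U ∧
        Ahat.mulVec x = bhat + b ∧ 0 ≤ x ∧
        Ahat.transpose.mulVec y + s = chat + c ∧ 0 ≤ s ∧
        e = (((bhat + b) ⬝ᵥ y : ℝ) : EReal)} =
      sSup {e : EReal | ∃ (z : RSAIdx m n → ℝ) (Z : Matrix (RSAIdx m n) (RSAIdx m n) ℝ),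
        (Emat m n Ahat bhat chat).mulVec z = fvec m n ∧
        (∀ r, (Emat m n Ahat bhat chat * Z * (Emat m n Ahat bhat chat).transpose) r r =
          fvec m n r * fvec m n r) ∧
        borderedMatrix z Z ∈ CPcone (borderedCone m n U) ∧
        e = (((∑ i, Z (Sum.inr (Sum.inl i))
                      (Sum.inr (Sum.inr (Sum.inr (Sum.inr (Sum.inl i))))))
              + ∑ i, bhat i * z (Sum.inr (Sum.inr (Sum.inr (Sum.inr (Sum.inl i))))) : ℝ) : EReal)} := by
  apply le_antisymm
  · apply sSup_le_sSup
    rintro e ⟨b, c, x, y, s, hbc, hPx, hx, hDy, hs, he⟩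
    set z0 : RSAIdx m n → ℝ :=
      Sum.elim (fun _ => 1) (Sum.elim b (Sum.elim c (Sum.elim x (Sum.elim y s)))) with hz0
    have hEz : (Emat m n Ahat bhat chat).mulVec z0 = fvec m n := by
      funext r
      match r with
      | Sum.inl (Sum.inl i) =>
        rw [Emat_mulVec_b]
        have h1 := congrFun hPx i
        simp only [mulVec, dotProduct, Pi.add_apply] at h1
        simp only [hz0, Sum.elim_inl, Sum.elim_inr, fvec]
        linarith
      | Sum.inl (Sum.inr j) =>
        rw [Emat_mulVec_c]
        have h1 := congrFun hDy j
        simp only [mulVec, dotProduct, Pi.add_apply, transpose_apply] at h1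
        simp only [hz0, Sum.elim_inl, Sum.elim_inr, fvec]
        linarith
      | Sum.inr () =>
        rw [Emat_mulVec_t]
        simp [hz0, fvec]
    refine ⟨z0, vecMulVec z0 z0, hEz, ?_, ?_, ?_⟩
    · intro r
      rw [conj_vecMulVec, hEz]
    · refine ⟨1, fun _ => Sum.elim (fun _ => 1) z0, ?_, ?_⟩
      · intro j
        simp only [borderedCone, Kset, Set.mem_setOf_eq, Sum.elim_inl, Sum.elim_inr, hz0]
        refine ⟨by norm_num, ?_, fun j => hx j, fun j => hs j⟩
        left
        exact ⟨by norm_num, by simpa using hbc⟩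
      · funext i j
        match i, j with
        | Sum.inl (), Sum.inl () => simp [borderedMatrix, vecMulVec]
        | Sum.inl (), Sum.inr j => simp [borderedMatrix, vecMulVec]
        | Sum.inr i, Sum.inl () => simp [borderedMatrix, vecMulVec]
        | Sum.inr i, Sum.inr j => simp [borderedMatrix, vecMulVec]
    · rw [he]
      congr 1
      simp only [hz0, vecMulVec_apply, Sum.elim_inl, Sum.elim_inr, dotProduct, Pi.add_apply]
      rw [← Finset.sum_add_distrib]
      exact Finset.sum_congr rfl fun i _ => by ring
  · apply sSup_le
    rintro e ⟨z, Z, hEz, hdiag, ⟨k, v, hv, hsum⟩, he⟩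
    have hsum' : ∀ a b', borderedMatrix z Z a b' = ∑ j, v j a * v j b' := by
      intro a b'; rw [hsum]; simp [Matrix.sum_apply, vecMulVec_apply]
    have hδδ : ∑ j, v j (Sum.inl ()) * v j (Sum.inl ()) = 1 := by
      have h := hsum' (Sum.inl ()) (Sum.inl ())
      simp only [borderedMatrix, Matrix.fromBlocks_apply₁₁, Matrix.of_apply] at h
      linarith
    have hzv : ∀ i, z i = ∑ j, v j (Sum.inl ()) * v j (Sum.inr i) := by
      intro i
      have h := hsum' (Sum.inl ()) (Sum.inr i)
      simpa [borderedMatrix, Matrix.fromBlocks_apply₁₂] using h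
    have hZv : ∀ i i', Z i i' = ∑ j, v j (Sum.inr i) * v j (Sum.inr i') := by
      intro i i'
      have h := hsum' (Sum.inr i) (Sum.inr i')
      simpa [borderedMatrix, Matrix.fromBlocks_apply₂₂] using h
    have hdiag' : ∀ r, (∑ j, (Emat m n Ahat bhat chat).mulVec (fun i => v j (Sum.inr i)) r
        * (Emat m n Ahat bhat chat).mulVec (fun i => v j (Sum.inr i)) r)
        = fvec m n r * fvec m n r := by
      intro r
      rw [← hdiag r]
      have hZmat : Z = ∑ j, vecMulVec (fun i => v j (Sum.inr i)) (fun i => v j (Sum.inr i)) := by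
        ext i i'; rw [hZv]; simp [Matrix.sum_apply, vecMulVec_apply]
      rw [hZmat, Matrix.mul_sum, Matrix.sum_mul, Matrix.sum_apply]
      exact (Finset.sum_congr rfl fun j _ => (conj_vecMulVec _ _ _ _ _)).symm
    have htt : ∑ j, v j (Sum.inr (Sum.inl ())) * v j (Sum.inr (Sum.inl ())) = 1 := by
      have h := hdiag' (Sum.inr ())
      simpa [Emat_mulVec_t, fvec] using h
    have hδt : ∑ j, v j (Sum.inl ()) * v j (Sum.inr (Sum.inl ())) = 1 := by
      rw [← hzv (Sum.inl ())]
      have h1 := congrFun hEz (Sum.inr ())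
      rw [Emat_mulVec_t] at h1
      simpa [fvec] using h1
    have hδeq : ∀ j, v j (Sum.inl ()) = v j (Sum.inr (Sum.inl ())) := by
      have h0 : ∑ j, (v j (Sum.inl ()) - v j (Sum.inr (Sum.inl ()))) *
          (v j (Sum.inl ()) - v j (Sum.inr (Sum.inl ()))) = 0 := by
        have hexp : ∑ j, (v j (Sum.inl ()) - v j (Sum.inr (Sum.inl ()))) *
            (v j (Sum.inl ()) - v j (Sum.inr (Sum.inl ()))) =
            (∑ j, v j (Sum.inl ()) * v j (Sum.inl ()))
            - 2 * (∑ j, v j (Sum.inl ()) * v j (Sum.inr (Sum.inl ())))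
            + ∑ j, v j (Sum.inr (Sum.inl ())) * v j (Sum.inr (Sum.inl ())) := by
          rw [Finset.mul_sum, ← Finset.sum_sub_distrib, ← Finset.sum_add_distrib]
          exact Finset.sum_congr rfl fun j _ => by ring
        rw [hexp, hδδ, hδt, htt]; ring
      intro j
      have h1 := (Finset.sum_eq_zero_iff_of_nonneg
        (fun j _ => mul_self_nonneg _)).mp h0 j (Finset.mem_univ j)
      have h2 := mul_self_eq_zero.mp h1
      linarith
    have hrow0 : ∀ (j : Fin k) (r : Fin m ⊕ Fin n),
        (Emat m n Ahat bhat chat).mulVec (fun i => v j (Sum.inr i)) (Sum.inl r) = 0 := by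
      intro j r
      have h := hdiag' (Sum.inl r)
      have hf : fvec m n (Sum.inl r) = 0 := by cases r <;> simp [fvec]
      rw [hf] at h
      norm_num at h
      have h1 := (Finset.sum_eq_zero_iff_of_nonneg
        (fun j _ => mul_self_nonneg _)).mp h j (Finset.mem_univ j)
      exact mul_self_eq_zero.mp h1
    have ht0 : ∀ j, 0 ≤ v j (Sum.inr (Sum.inl ())) := by
      intro j
      rcases (hv j).2.1 with h | h
      · exact le_of_lt h.1
      · rw [Set.mem_singleton_iff] at h
        exact le_of_eq (congrArg Prod.fst h).symm
    -- objective decomposition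
    have hrobj : ((∑ i, Z (Sum.inr (Sum.inl i)) (Sum.inr (Sum.inr (Sum.inr (Sum.inr (Sum.inl i))))))
        + ∑ i, bhat i * z (Sum.inr (Sum.inr (Sum.inr (Sum.inr (Sum.inl i)))))) =
        ∑ j, ((∑ i, v j (Sum.inr (Sum.inr (Sum.inl i)))
            * v j (Sum.inr (Sum.inr (Sum.inr (Sum.inr (Sum.inr (Sum.inl i)))))))
          + v j (Sum.inr (Sum.inl ()))
            * ∑ i, bhat i * v j (Sum.inr (Sum.inr (Sum.inr (Sum.inr (Sum.inr (Sum.inl i))))))) := by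
      rw [Finset.sum_add_distrib]
      congr 1
      · simp only [hZv]
        exact Finset.sum_comm
      · simp only [hzv, Finset.mul_sum]
        rw [Finset.sum_comm]
        refine Finset.sum_congr rfl fun j _ => ?_
        refine Finset.sum_congr rfl fun i _ => ?_
        rw [hδeq j]; ring
    set val : Fin k → ℝ := fun j =>
      (bhat + (v j (Sum.inr (Sum.inl ())))⁻¹ • fun i => v j (Sum.inr (Sum.inr (Sum.inl i)))) ⬝ᵥ
        ((v j (Sum.inr (Sum.inl ())))⁻¹ •
          fun i => v j (Sum.inr (Sum.inr (Sum.inr (Sum.inr (Sum.inr (Sum.inl i))))))) with hval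
    have hTne : (Finset.univ.filter fun j => 0 < v j (Sum.inr (Sum.inl ()))).Nonempty := by
      rw [Finset.filter_nonempty_iff]
      by_contra h
      push_neg at h
      have hall : ∀ j : Fin k, v j (Sum.inr (Sum.inl ())) = 0 :=
        fun j => le_antisymm (h j (Finset.mem_univ j)) (ht0 j)
      have h01 : (0:ℝ) = 1 := by
        rw [← htt]
        exact (Finset.sum_eq_zero fun j _ => by rw [hall j, zero_mul]).symm
      norm_num at h01
    obtain ⟨j0, hj0, hmax⟩ := Finset.exists_max_image _ val hTne
    have hj0t : 0 < v j0 (Sum.inr (Sum.inl ())) := (Finset.mem_filter.mp hj0).2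
    -- feasibility of the scaled point for any j with positive t
    have hval_mem : ∀ j : Fin k, 0 < v j (Sum.inr (Sum.inl ())) →
        ((val j : ℝ) : EReal) ∈ {e : EReal | ∃ b c x y s, (b, c) ∈ U ∧
          Ahat.mulVec x = bhat + b ∧ 0 ≤ x ∧
          Ahat.transpose.mulVec y + s = chat + c ∧ 0 ≤ s ∧
          e = (((bhat + b) ⬝ᵥ y : ℝ) : EReal)} := by
      intro j ht
      have htne : v j (Sum.inr (Sum.inl ())) ≠ 0 := ne_of_gt ht
      refine ⟨(v j (Sum.inr (Sum.inl ())))⁻¹ • fun i => v j (Sum.inr (Sum.inr (Sum.inl i))),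
        (v j (Sum.inr (Sum.inl ())))⁻¹ • fun q => v j (Sum.inr (Sum.inr (Sum.inr (Sum.inl q)))),
        (v j (Sum.inr (Sum.inl ())))⁻¹ • fun q => v j (Sum.inr (Sum.inr (Sum.inr (Sum.inr (Sum.inl q))))),
        (v j (Sum.inr (Sum.inl ())))⁻¹ • fun i => v j (Sum.inr (Sum.inr (Sum.inr (Sum.inr (Sum.inr (Sum.inl i)))))),
        (v j (Sum.inr (Sum.inl ())))⁻¹ • fun q => v j (Sum.inr (Sum.inr (Sum.inr (Sum.inr (Sum.inr (Sum.inr q)))))),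
        ?_, ?_, ?_, ?_, ?_, rfl⟩
      · rcases (hv j).2.1 with h | h
        · exact h.2
        · rw [Set.mem_singleton_iff] at h
          exact absurd (congrArg Prod.fst h) (ne_of_gt ht)
      · funext i
        have hr := hrow0 j (Sum.inl i)
        rw [Emat_mulVec_b] at hr
        simp only [mulVec, dotProduct, Pi.add_apply, Pi.smul_apply, smul_eq_mul]
        have hs1 : ∑ q, Ahat i q * ((v j (Sum.inr (Sum.inl ())))⁻¹
            * v j (Sum.inr (Sum.inr (Sum.inr (Sum.inr (Sum.inl q)))))) =
            (v j (Sum.inr (Sum.inl ())))⁻¹ * ∑ q, Ahat i q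
              * v j (Sum.inr (Sum.inr (Sum.inr (Sum.inr (Sum.inl q))))) := by
          rw [Finset.mul_sum]
          exact Finset.sum_congr rfl fun q _ => by ring
        rw [hs1]
        have hs2 : ∑ q, Ahat i q * v j (Sum.inr (Sum.inr (Sum.inr (Sum.inr (Sum.inl q))))) =
            bhat i * v j (Sum.inr (Sum.inl ())) + v j (Sum.inr (Sum.inr (Sum.inl i))) := by
          linarith
        rw [hs2]
        field_simp
      · intro q
        simp only [Pi.smul_apply, smul_eq_mul, Pi.zero_apply]
        exact mul_nonneg (inv_nonneg.mpr (le_of_lt ht)) ((hv j).2.2.1 q)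
      · funext q
        have hr := hrow0 j (Sum.inr q)
        rw [Emat_mulVec_c] at hr
        simp only [mulVec, dotProduct, Pi.add_apply, Pi.smul_apply, smul_eq_mul, transpose_apply]
        have hs1 : ∑ i, Ahat i q * ((v j (Sum.inr (Sum.inl ())))⁻¹
            * v j (Sum.inr (Sum.inr (Sum.inr (Sum.inr (Sum.inr (Sum.inl i))))))) =
            (v j (Sum.inr (Sum.inl ())))⁻¹ * ∑ i, Ahat i q
              * v j (Sum.inr (Sum.inr (Sum.inr (Sum.inr (Sum.inr (Sum.inl i)))))) := by
          rw [Finset.mul_sum]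
          exact Finset.sum_congr rfl fun i _ => by ring
        rw [hs1]
        have hs2 : ∑ i, Ahat i q * v j (Sum.inr (Sum.inr (Sum.inr (Sum.inr (Sum.inr (Sum.inl i)))))) =
            chat q * v j (Sum.inr (Sum.inl ())) + v j (Sum.inr (Sum.inr (Sum.inr (Sum.inl q))))
              - v j (Sum.inr (Sum.inr (Sum.inr (Sum.inr (Sum.inr (Sum.inr q)))))) := by
          linarith
        rw [hs2]
        field_simp
        ring
      · intro q
        simp only [Pi.smul_apply, smul_eq_mul, Pi.zero_apply]
        exact mul_nonneg (inv_nonneg.mpr (le_of_lt ht)) ((hv j).2.2.2 q)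
    -- bound each term
    have hstep : ∀ j : Fin k,
        ((∑ i, v j (Sum.inr (Sum.inr (Sum.inl i)))
            * v j (Sum.inr (Sum.inr (Sum.inr (Sum.inr (Sum.inr (Sum.inl i)))))))
          + v j (Sum.inr (Sum.inl ()))
            * ∑ i, bhat i * v j (Sum.inr (Sum.inr (Sum.inr (Sum.inr (Sum.inr (Sum.inl i)))))))
        ≤ (v j (Sum.inr (Sum.inl ())) * v j (Sum.inr (Sum.inl ()))) * val j0 := by
      intro j
      rcases lt_or_eq_of_le (ht0 j) with ht | ht
      · have hterm := term_eq (v j (Sum.inr (Sum.inl ()))) (ne_of_gt ht)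
          (fun i => v j (Sum.inr (Sum.inr (Sum.inl i))))
          (fun i => v j (Sum.inr (Sum.inr (Sum.inr (Sum.inr (Sum.inr (Sum.inl i))))))) bhat
        rw [hterm]
        refine mul_le_mul_of_nonneg_left ?_ (mul_self_nonneg _)
        exact hmax j (Finset.mem_filter.mpr ⟨Finset.mem_univ j, ht⟩)
      · -- t j = 0, so b-block is zero
        have hb0 : ∀ i, v j (Sum.inr (Sum.inr (Sum.inl i))) = 0 := by
          rcases (hv j).2.1 with h | h
          · have h1 : (0:ℝ) < v j (Sum.inr (Sum.inl ())) := h.1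
            rw [← ht] at h1
            exact absurd h1 (lt_irrefl 0)
          · rw [Set.mem_singleton_iff] at h
            intro i
            have := congrArg Prod.snd h
            have := congrArg Prod.fst this
            exact congrFun this i
        rw [← ht]
        simp only [hb0, zero_mul, mul_zero, Finset.sum_const_zero, add_zero, zero_add]
        norm_num
    rw [he, hrobj]
    have hfin : ∑ j, ((∑ i, v j (Sum.inr (Sum.inr (Sum.inl i)))
            * v j (Sum.inr (Sum.inr (Sum.inr (Sum.inr (Sum.inr (Sum.inl i)))))))
          + v j (Sum.inr (Sum.inl ()))
            * ∑ i, bhat i * v j (Sum.inr (Sum.inr (Sum.inr (Sum.inr (Sum.inr (Sum.inl i)))))))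
        ≤ val j0 := by
      calc _ ≤ ∑ j, (v j (Sum.inr (Sum.inl ())) * v j (Sum.inr (Sum.inl ()))) * val j0 :=
            Finset.sum_le_sum fun j _ => hstep j
        _ = (∑ j, v j (Sum.inr (Sum.inl ())) * v j (Sum.inr (Sum.inl ()))) * val j0 := by
            rw [Finset.sum_mul]
        _ = val j0 := by rw [htt, one_mul]
    calc ((_ : ℝ) : EReal) ≤ ((val j0 : ℝ) : EReal) := EReal.coe_le_coe_iff.mpr hfin
      _ ≤ _ := le_sSup (hval_mem j0 hj0t)
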